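/- arXiv:1201.2837 — 5 statements merged into one kernel-verified Lean document; each statement's English description precedes it below -/
import Mathlib

section
/- Let β > −1 with β ≠ 0, let ϵ ∈ ℝ, ν ∈ ℝ, and ω ∈ ℝ. Define w(x) := ω e_z × x and u := u_P + w. Then: (i) div u = 0 at every point of ℝ³; (ii) ε(u)(x) = ε(u_P)(x) for every x ∈ ℝ³, and div ε(u)(x) = 0 for every x; (iii) u(x)·∇φ(x) = 0 for every x ∈ ℝ³, so u is tangent to the boundary of the spheroid Ω_β; (iv) there exists a differentiable function p : ℝ³ → ℝ such that (u·∇)u(x) − 2ν·div ε(u)(x) + 2ϵ e_x × u(x) + ∇p(x) = 0 for every x ∈ ℝ³. In particular, for every viscosity ν and every ω, the field u_P + ω e_z × x is a steady solution of the precessing Navier–Stokes equations in Ω_β satisfying the slip condition and having the same tangential boundary stress as the Poincaré flow; hence the Poincaré flow is not an isolated steady state (it is not an attractor). -/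
open MeasureTheory

noncomputable section

abbrev E3 : Type := Fin 3 → ℝ

/-- standard basis vector -/
def sb (i : Fin 3) : E3 := Pi.single i 1

/-- Euclidean dot product -/
def dot3 (a b : E3) : ℝ := ∑ i, a i * b i

/-- cross product -/
def cross3 (a b : E3) : E3 :=
  ![a 1 * b 2 - a 2 * b 1, a 2 * b 0 - a 0 * b 2, a 0 * b 1 - a 1 * b 0]

/-- Jacobian matrix of a vector field: entry (i,j) is ∂ⱼ uᵢ -/
def jac (u : E3 → E3) (x : E3) : Matrix (Fin 3) (Fin 3) ℝ :=
  fun i j => fderiv ℝ u x (sb j) i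

/-- strain rate tensor ε(u) = ½(Du + Duᵀ) -/
def strain (u : E3 → E3) (x : E3) : Matrix (Fin 3) (Fin 3) ℝ :=
  fun i j => (jac u x i j + jac u x j i) / 2

/-- divergence (trace of Jacobian) -/
def div3 (u : E3 → E3) (x : E3) : ℝ := ∑ i, jac u x i i

/-- divergence of the strain tensor: j-th component Σᵢ ∂ᵢ ε(u)ᵢⱼ -/
def divStrain (u : E3 → E3) (x : E3) : E3 :=
  fun j => ∑ i, fderiv ℝ (fun y => strain u y i j) x (sb i)

/-- convective term (a·∇)b = Db (a) -/
def conv (a b : E3 → E3) (x : E3) : E3 := fderiv ℝ b x (a x)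

/-- gradient of a scalar field -/
def grad3 (p : E3 → ℝ) (x : E3) : E3 := fun i => fderiv ℝ p x (sb i)

/-- Poincaré flow -/
def uP (β ε : ℝ) (x : E3) : E3 :=
  ![-(x 1), x 0 - (2 * ε / β) * (1 + β) * x 2, (2 * ε / β) * x 1]

/-- level function of the spheroid -/
def phi (β : ℝ) (x : E3) : ℝ := (x 0) ^ 2 + (x 1) ^ 2 + (1 + β) * (x 2) ^ 2 - 1

/-- gradient of φ -/
def gradPhi (β : ℝ) (x : E3) : E3 := ![2 * x 0, 2 * x 1, 2 * (1 + β) * x 2]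

/-- the spheroid Ω_β -/
def Omega (β : ℝ) : Set E3 := {x | phi β x < 0}

/-- componentwise Laplacian -/
def lap3 (u : E3 → E3) (x : E3) : E3 :=
  fun j => ∑ i, fderiv ℝ (fun y => jac u y j i) x (sb i)

-- helpers
def clmA (a c k : ℝ) : E3 →L[ℝ] E3 :=
  ContinuousLinearMap.pi
    ![(-a) • ContinuousLinearMap.proj 1,
      a • ContinuousLinearMap.proj 0 - c • ContinuousLinearMap.proj 2,
      k • ContinuousLinearMap.proj 1]

lemma clmA_apply (a c k : ℝ) (x : E3) (i : Fin 3) :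
    clmA a c k x i = ![-(a * x 1), a * x 0 - c * x 2, k * x 1] i := by
  fin_cases i <;> simp [clmA, ContinuousLinearMap.proj_apply]

lemma sb_val : ∀ i j : Fin 3, sb i j = if j = i then 1 else 0 := by
  intro i j; simp [sb, Pi.single_apply]

lemma jac_val (a c k : ℝ) (u : E3 → E3) (hu : u = ⇑(clmA a c k)) (x : E3)
    (i j : Fin 3) :
    jac u x i j = ![![0, -a, 0], ![a, 0, -c], ![0, k, 0]] i j := by
  have hf : fderiv ℝ u x = clmA a c k := by rw [hu]; exact (clmA a c k).fderiv
  unfold jac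
  rw [hf, clmA_apply]
  fin_cases i <;> fin_cases j <;> simp [sb_val]


/-- For β > −1, β ≠ 0, any precession rate ϵ, viscosity ν and rotation rate ω,
the field u = u_P + ω e_z × x is divergence free, has the same strain (hence the same
tangential boundary stress) as the Poincaré flow, has div ε(u) = 0, is tangent to the
boundary of the spheroid Ω_β, and solves the steady precessing Navier–Stokes equations
for some pressure p.  Hence the Poincaré flow is not an isolated steady state. -/
theorem stmt_0 (β ε ν ω : ℝ) (hβ : -1 < β) (hβ0 : β ≠ 0)
    (w : E3 → E3) (hw : w = fun x => ω • cross3 (sb 2) x)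
    (u : E3 → E3) (hu : u = fun x => uP β ε x + w x) :
    (∀ x : E3, div3 u x = 0) ∧
    (∀ x : E3, strain u x = strain (uP β ε) x) ∧
    (∀ x : E3, divStrain u x = 0) ∧
    (∀ x : E3, dot3 (u x) (gradPhi β x) = 0) ∧
    (∃ p : E3 → ℝ, Differentiable ℝ p ∧
      ∀ x : E3, conv u u x - (2 * ν) • divStrain u x
        + (2 * ε) • cross3 (sb 0) (u x) + grad3 p x = 0) := by
  set a : ℝ := 1 + ω with ha
  set c : ℝ := 2 * ε / β * (1 + β) with hc
  set k : ℝ := 2 * ε / β with hk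
  have hueq : u = ⇑(clmA a c k) := by
    funext x
    funext i
    rw [hu, hw, clmA_apply]
    fin_cases i <;> simp [uP, cross3, sb_val, ha, hc, hk] <;> ring
  have hPeq : uP β ε = ⇑(clmA 1 c k) := by
    funext x
    funext i
    rw [clmA_apply]
    fin_cases i <;> simp [uP, hc, hk] <;> ring
  have hjac := jac_val a c k u hueq
  have hjacP := jac_val 1 c k (uP β ε) hPeq
  have hdiv : ∀ x : E3, div3 u x = 0 := by
    intro x
    simp [div3, Fin.sum_univ_three, hjac x]
  have hstrain : ∀ x : E3, strain u x = strain (uP β ε) x := by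
    intro x
    funext i j
    unfold strain
    rw [hjac x i j, hjac x j i, hjacP x i j, hjacP x j i]
    fin_cases i <;> fin_cases j <;> norm_num
  have hdivS : ∀ x : E3, divStrain u x = 0 := by
    intro x
    funext j
    have hconst : ∀ i j : Fin 3, (fun y : E3 => strain u y i j)
        = fun _ : E3 => ((![![0, -a, 0], ![a, 0, -c], ![0, k, 0]] : Matrix (Fin 3) (Fin 3) ℝ) i j
          + ![![0, -a, 0], ![a, 0, -c], ![0, k, 0]] j i) / 2 := by
      intro i j
      funext y
      unfold strain
      rw [hjac y i j, hjac y j i]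
    simp only [divStrain, hconst, fderiv_const]
    simp
  refine ⟨hdiv, hstrain, hdivS, ?_, ?_⟩
  · intro x
    have hux : ∀ i, u x i = ![-(a * x 1), a * x 0 - c * x 2, k * x 1] i := by
      intro i; rw [hueq]; exact clmA_apply a c k x i
    simp only [dot3, Fin.sum_univ_three, hux, gradPhi]
    simp only [Matrix.cons_val_zero, Matrix.cons_val_one, Matrix.head_cons,
      Matrix.cons_val_two, Matrix.tail_cons]
    field_simp
    ring
  · -- pressure
    set q0 : ℝ := a ^ 2 / 2 with hq0
    set q1 : ℝ := (a ^ 2 + c * k + 2 * ε * k) / 2 with hq1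
    set q2 : ℝ := c * (k + 2 * ε) / 2 with hq2
    set q3 : ℝ := -(a * c) with hq3
    set p : E3 → ℝ := fun y =>
      q0 * (y 0 * y 0) + q1 * (y 1 * y 1) + q2 * (y 2 * y 2) + q3 * (y 0 * y 2) with hp
    have key : ∀ x : E3, HasFDerivAt p
        (((2 * q0 * x 0 + q3 * x 2) • ContinuousLinearMap.proj 0
          + (2 * q1 * x 1) • ContinuousLinearMap.proj 1
          + (2 * q2 * x 2 + q3 * x 0) • ContinuousLinearMap.proj 2 :
            E3 →L[ℝ] ℝ)) x := by
      intro x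
      have h0 : HasFDerivAt (fun y : E3 => y 0)
          (ContinuousLinearMap.proj (R := ℝ) (φ := fun _ : Fin 3 => ℝ) 0) x :=
        hasFDerivAt_apply 0 x
      have h1 : HasFDerivAt (fun y : E3 => y 1)
          (ContinuousLinearMap.proj (R := ℝ) (φ := fun _ : Fin 3 => ℝ) 1) x :=
        hasFDerivAt_apply 1 x
      have h2 : HasFDerivAt (fun y : E3 => y 2)
          (ContinuousLinearMap.proj (R := ℝ) (φ := fun _ : Fin 3 => ℝ) 2) x :=
        hasFDerivAt_apply 2 x
      have H := ((((h0.mul h0).const_mul q0).add ((h1.mul h1).const_mul q1)).add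
          ((h2.mul h2).const_mul q2)).add ((h0.mul h2).const_mul q3)
      refine H.congr_fderiv ?_
      ext y
      simp [ContinuousLinearMap.proj_apply]
      ring
    have hdiffp : Differentiable ℝ p := fun x => (key x).differentiableAt
    refine ⟨p, hdiffp, ?_⟩
    intro x
    have hf : fderiv ℝ u x = clmA a c k := by rw [hueq]; exact (clmA a c k).fderiv
    have hux : ∀ i, u x i = ![-(a * x 1), a * x 0 - c * x 2, k * x 1] i := by
      intro i; rw [hueq]; exact clmA_apply a c k x i
    have hgrad : ∀ i, grad3 p x i =
        (2 * q0 * x 0 + q3 * x 2) * sb i 0 + (2 * q1 * x 1) * sb i 1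
          + (2 * q2 * x 2 + q3 * x 0) * sb i 2 := by
      intro i
      unfold grad3
      rw [(key x).fderiv]
      simp [ContinuousLinearMap.proj_apply]
    have e0 : u x 0 = -(a * x 1) := by rw [hux 0]; simp
    have e1 : u x 1 = a * x 0 - c * x 2 := by rw [hux 1]; simp
    have e2 : u x 2 = k * x 1 := by rw [hux 2]; simp
    have hg0 : grad3 p x 0 = 2 * q0 * x 0 + q3 * x 2 := by
      rw [hgrad 0]; simp [sb_val]
    have hg1 : grad3 p x 1 = 2 * q1 * x 1 := by
      rw [hgrad 1]; simp [sb_val]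
    have hg2 : grad3 p x 2 = 2 * q2 * x 2 + q3 * x 0 := by
      rw [hgrad 2]; simp [sb_val]
    have hcv : ∀ j, conv u u x j = ![-(a * u x 1), a * u x 0 - c * u x 2,
        k * u x 1] j := by
      intro j
      rw [conv, hf]
      exact clmA_apply a c k (u x) j
    funext j
    rw [hdivS x]
    simp only [Pi.add_apply, Pi.sub_apply, Pi.smul_apply, Pi.zero_apply,
      smul_eq_mul, mul_zero, sub_zero]
    rw [hcv j, hgrad j]
    fin_cases j
    · simp [cross3, sb_val, e0, e1, e2, hq0, hq3]
      ring
    · simp [cross3, sb_val, e0, e1, e2, hq1]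
      ring
    · simp [cross3, sb_val, e0, e1, e2, hq2, hq3, hc, hk]
      field_simp
      ring
end
end

section
/- Let β > −1 with β ≠ 0 and ϵ ∈ ℝ. The Poincaré flow u_P satisfies: (i) div u_P = 0 at every point of ℝ³; (ii) u_P(x)·∇φ(x) = 0 for every x ∈ ℝ³ (in particular u_P is tangent to the boundary of the spheroid Ω_β); (iii) there exists a differentiable function p : ℝ³ → ℝ such that (u_P·∇)u_P(x) + 2ϵ e_x × u_P(x) + ∇p(x) = 0 for every x ∈ ℝ³. Since moreover div ε(u_P) = 0 everywhere, u_P is a steady solution of the precessing Navier–Stokes equations in Ω_β with slip boundary condition, for every viscosity. -/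
open MeasureTheory

noncomputable section

/-- coordinate projection as a continuous linear map -/
def pr3 (i : Fin 3) : E3 →L[ℝ] ℝ := ContinuousLinearMap.proj i

lemma pr3_apply (i : Fin 3) (y : E3) : pr3 i y = y i := rfl

/-- the (constant) Jacobian of the Poincaré flow, as a continuous linear map -/
def Lmap (β ε : ℝ) : E3 →L[ℝ] E3 :=
  ContinuousLinearMap.pi
    ![ -pr3 1, pr3 0 - ((2 * ε / β) * (1 + β)) • pr3 2, (2 * ε / β) • pr3 1 ]

lemma Lmap_apply (β ε : ℝ) (y : E3) (i : Fin 3) :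
    Lmap β ε y i = uP β ε y i := by
  fin_cases i <;>
    simp [Lmap, pr3, uP, ContinuousLinearMap.pi_apply]

lemma uP_hasFDerivAt (β ε : ℝ) (x : E3) :
    HasFDerivAt (uP β ε) (Lmap β ε : E3 →L[ℝ] E3) x := by
  have : uP β ε = fun y => Lmap β ε y := by
    funext y i; rw [Lmap_apply]
  rw [this]; exact (Lmap β ε).hasFDerivAt

lemma fderiv_uP (β ε : ℝ) (x : E3) : fderiv ℝ (uP β ε) x = Lmap β ε :=
  (uP_hasFDerivAt β ε x).fderiv

lemma jac_uP (β ε : ℝ) (x : E3) (i j : Fin 3) :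
    jac (uP β ε) x i j = uP β ε (sb j) i := by
  unfold jac; rw [fderiv_uP, Lmap_apply]

/-- the Poincaré flow is divergence free, tangent to the boundary of the
spheroid Ω_β, solves the steady precessing Euler/Navier–Stokes momentum balance for some
pressure p, and has div ε(u_P) = 0 everywhere; hence it is a steady solution with slip
boundary condition for every viscosity. -/
theorem stmt_1 (β ε : ℝ) (hβ : -1 < β) (hβ0 : β ≠ 0) :
    (∀ x : E3, div3 (uP β ε) x = 0) ∧
    (∀ x : E3, dot3 (uP β ε x) (gradPhi β x) = 0) ∧
    (∃ p : E3 → ℝ, Differentiable ℝ p ∧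
      ∀ x : E3, conv (uP β ε) (uP β ε) x + (2 * ε) • cross3 (sb 0) (uP β ε x)
        + grad3 p x = 0) ∧
    (∀ x : E3, divStrain (uP β ε) x = 0) := by
  set c : ℝ := (2 * ε / β) * (1 + β) with hc
  set c' : ℝ := 2 * ε / β with hc'
  refine ⟨?_, ?_, ?_, ?_⟩
  · -- divergence free
    intro x
    simp [div3, Fin.sum_univ_three, jac_uP, uP, sb, Pi.single_apply]
  · -- tangency
    intro x
    simp only [dot3, Fin.sum_univ_three, uP, gradPhi, Matrix.cons_val_zero,
      Matrix.cons_val_one, Matrix.head_cons, Matrix.cons_val_two, Matrix.tail_cons]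
    ring
  · -- pressure
    set B : ℝ := 1 + c * c' + 2 * ε * c' with hB
    refine ⟨fun y => (1 / 2) * (y 0 * y 0) + (B / 2) * (y 1 * y 1)
      + (c ^ 2 / 2) * (y 2 * y 2) - c * (y 0 * y 2), ?_, ?_⟩
    · have hd : ∀ i : Fin 3, Differentiable ℝ (fun y : E3 => y i) :=
        fun i => (pr3 i).differentiable
      exact (((((hd 0).mul (hd 0)).const_mul (1 / 2)).add
        (((hd 1).mul (hd 1)).const_mul (B / 2))).add
        (((hd 2).mul (hd 2)).const_mul (c ^ 2 / 2))).sub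
        (((hd 0).mul (hd 2)).const_mul c)
    · intro x
      have h0 : HasFDerivAt (fun y : E3 => y 0) (pr3 0) x := (pr3 0).hasFDerivAt
      have h1 : HasFDerivAt (fun y : E3 => y 1) (pr3 1) x := (pr3 1).hasFDerivAt
      have h2 : HasFDerivAt (fun y : E3 => y 2) (pr3 2) x := (pr3 2).hasFDerivAt
      have hp := ((((h0.mul h0).const_mul ((1:ℝ) / 2)).add
        ((h1.mul h1).const_mul (B / 2))).add
        ((h2.mul h2).const_mul (c ^ 2 / 2))).sub
        ((h0.mul h2).const_mul c)
      have hpd : fderiv ℝ (fun y : E3 => (1 / 2) * (y 0 * y 0) + (B / 2) * (y 1 * y 1)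
        + (c ^ 2 / 2) * (y 2 * y 2) - c * (y 0 * y 2)) x = _ := hp.fderiv
      funext i
      have hsb : ∀ j k : Fin 3, sb j k = if j = k then 1 else 0 := by
        intro j k; simp [sb, Pi.single_apply, eq_comm]
      fin_cases i <;>
      · simp only [Pi.add_apply, Pi.smul_apply, Pi.zero_apply, smul_eq_mul,
          conv, fderiv_uP, Lmap_apply, grad3, hpd, cross3,
          ContinuousLinearMap.sub_apply, ContinuousLinearMap.add_apply,
          ContinuousLinearMap.smul_apply, ContinuousLinearMap.coe_smul',
          pr3_apply, uP, hsb, sb, Matrix.cons_val_zero, Matrix.cons_val_one,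
          Matrix.head_cons, Matrix.cons_val_two, Matrix.tail_cons,
          Pi.single_apply, smul_eq_mul]
        simp [hB, hc, hc']
        try field_simp
        try ring
  · -- div of strain vanishes
    intro x
    funext j
    have hconst : ∀ i : Fin 3, (fun y : E3 => strain (uP β ε) y i j)
        = fun _ : E3 => (uP β ε (sb j) i + uP β ε (sb i) j) / 2 := by
      intro i; funext y; simp [strain, jac_uP]
    simp only [divStrain]
    rw [Fin.sum_univ_three, hconst 0, hconst 1, hconst 2]
    simp
end
end

section
/- Let β > −1 with β ≠ 0, ϵ ∈ ℝ, and ω ∈ ℝ. Define w(x) := ω e_z × x and q(x,y,z) := −ω(x² + y²) + (2ϵω/β)(1+β)·x·z. Then for every point x ∈ ℝ³, (u_P·∇)w(x) + (w·∇)u_P(x) + 2ϵ e_x × w(x) = ∇q(x). -/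
open MeasureTheory

noncomputable section

/-- with w = ω e_z × x and
q(x,y,z) = −ω(x²+y²) + (2ϵω/β)(1+β) x z, one has
(u_P·∇)w + (w·∇)u_P + 2ϵ e_x × w = ∇q everywhere. -/
theorem stmt_3 (β ε ω : ℝ) (hβ : -1 < β) (hβ0 : β ≠ 0)
    (w : E3 → E3) (hw : w = fun x => ω • cross3 (sb 2) x)
    (q : E3 → ℝ)
    (hq : q = fun x => -ω * ((x 0) ^ 2 + (x 1) ^ 2)
      + (2 * ε * ω / β) * (1 + β) * (x 0) * (x 2)) :
    ∀ x : E3, conv (uP β ε) w x + conv w (uP β ε) x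
      + (2 * ε) • cross3 (sb 0) (w x) = grad3 q x := by
  intro x
  set c : ℝ := (2 * ε * ω / β) * (1 + β) with hc
  set k : ℝ := (2 * ε / β) * (1 + β) with hk
  set Lw : E3 →L[ℝ] E3 := ContinuousLinearMap.pi
    ![(-ω) • ContinuousLinearMap.proj 1, ω • ContinuousLinearMap.proj 0, 0] with hLw
  set Lu : E3 →L[ℝ] E3 := ContinuousLinearMap.pi
    ![(-1 : ℝ) • ContinuousLinearMap.proj 1,
      ContinuousLinearMap.proj 0 - k • ContinuousLinearMap.proj 2,
      (2 * ε / β) • ContinuousLinearMap.proj 1] with hLu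
  have hwL : w = ⇑Lw := by
    funext y
    funext i
    fin_cases i <;>
      simp [hw, hLw, cross3, sb, Pi.single, Function.update, Pi.smul_apply,
        ContinuousLinearMap.pi_apply] <;> ring
  have huL : uP β ε = ⇑Lu := by
    funext y
    funext i
    fin_cases i <;>
      simp [uP, hLu, hk, ContinuousLinearMap.pi_apply, sub_eq_add_neg] <;> ring
  have hfw : fderiv ℝ w x = Lw := by rw [hwL]; exact Lw.fderiv
  have hfu : fderiv ℝ (uP β ε) x = Lu := by rw [huL]; exact Lu.fderiv
  have h0 : HasFDerivAt (fun y : E3 => y 0)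
      (ContinuousLinearMap.proj (R := ℝ) (φ := fun _ : Fin 3 => ℝ) 0) x :=
    (ContinuousLinearMap.proj (R := ℝ) (φ := fun _ : Fin 3 => ℝ) 0).hasFDerivAt
  have h1 : HasFDerivAt (fun y : E3 => y 1)
      (ContinuousLinearMap.proj (R := ℝ) (φ := fun _ : Fin 3 => ℝ) 1) x :=
    (ContinuousLinearMap.proj (R := ℝ) (φ := fun _ : Fin 3 => ℝ) 1).hasFDerivAt
  have h2 : HasFDerivAt (fun y : E3 => y 2)
      (ContinuousLinearMap.proj (R := ℝ) (φ := fun _ : Fin 3 => ℝ) 2) x :=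
    (ContinuousLinearMap.proj (R := ℝ) (φ := fun _ : Fin 3 => ℝ) 2).hasFDerivAt
  have hq2 : q = fun y : E3 => (-ω) * (y 0 * y 0) + (-ω) * (y 1 * y 1)
      + (c * y 0) * y 2 := by
    rw [hq]; funext y; ring
  have hq' := (((h0.mul h0).const_mul (-ω)).add
      ((h1.mul h1).const_mul (-ω))).add ((h0.const_mul c).mul h2)
  change HasFDerivAt (fun y : E3 => (-ω) * (y 0 * y 0) + (-ω) * (y 1 * y 1)
      + (c * y 0) * y 2) _ x at hq'
  rw [← hq2] at hq'
  have hfq : ∀ i : Fin 3, fderiv ℝ q x (sb i) =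
      (-ω) * (x 0 * sb i 0 + x 0 * sb i 0) + (-ω) * (x 1 * sb i 1 + x 1 * sb i 1)
        + (x 2 * (c * sb i 0) + (c * x 0) * sb i 2) := by
    intro i
    rw [hq'.fderiv]
    simp [ContinuousLinearMap.smul_apply, smul_eq_mul]
    ring
  funext i
  have hsb0 : (sb 0 : E3) = ![1, 0, 0] := by
    funext j; fin_cases j <;> simp [sb, Pi.single, Function.update]
  simp only [conv, grad3, hfw, hfu, hfq]
  fin_cases i <;>
    simp [hw, hLw, hLu, uP, cross3, hsb0, ContinuousLinearMap.pi_apply,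
      Pi.add_apply, Pi.smul_apply, smul_eq_mul, sub_eq_add_neg, sb,
      Pi.single, Function.update, hc, hk] <;>
    first
    | ring1
    | (field_simp; ring1)
    | linear_combination (-(2 * ε * ω * x 0)) * mul_inv_cancel₀ hβ0
end
end

section
/- Let u : ℝ³ → ℝ³ be a continuously differentiable, compactly supported vector field with div u(x) = 0 for every x. Then ∫_{ℝ³} (e_z × x)·((u·∇)u(x)) dx = 0; that is, the convective term exerts no torque about the z-axis. -/
open MeasureTheory

noncomputable section

/-- For a C¹ compactly supported scalar function, the integral of any directional
derivative vanishes. -/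
lemma aux_integral_fderiv_zero (g : E3 → ℝ) (hg : ContDiff ℝ 1 g)
    (hs : HasCompactSupport g) (v : E3) : ∫ x : E3, fderiv ℝ g x v = 0 := by
  have hcont : Continuous fun x : E3 => fderiv ℝ g x v :=
    (hg.fderiv_right (m := 0) le_rfl).continuous.clm_apply continuous_const
  have hcs : HasCompactSupport fun x : E3 => fderiv ℝ g x v :=
    (hs.fderiv (𝕜 := ℝ)).comp_left (g := fun L : E3 →L[ℝ] ℝ => L v) rfl
  have hint : Integrable (fun x : E3 => fderiv ℝ g x v) volume :=
    hcont.integrable_of_hasCompactSupport hcs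
  have h := integral_mul_fderiv_eq_neg_fderiv_mul_of_integrable
    (μ := volume) (f := fun _ : E3 => (1 : ℝ)) (g := g) (v := v)
    (by simp) (by simpa using hint)
    (by simpa using (hg.continuous.integrable_of_hasCompactSupport hs))
    (fun x _ => differentiableAt_const 1) (fun x _ => hg.differentiable one_ne_zero x)
  simpa using h

/-- for a C¹ compactly supported divergence-free field u, the convective
term exerts no torque about the z-axis: ∫ (e_z × x)·((u·∇)u) = 0. -/
theorem stmt_10 (u : E3 → E3) (hu : ContDiff ℝ 1 u) (hsupp : HasCompactSupport u)
    (hdiv : ∀ x : E3, div3 u x = 0) :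
    ∫ x : E3, dot3 (cross3 (sb 2) x) (conv u u x) = 0 := by
  classical
  set f : E3 → ℝ := fun y => y 0 * u y 1 - y 1 * u y 0 with hfdef
  have hui : ∀ i : Fin 3, ContDiff ℝ 1 (fun y => u y i) := fun i => contDiff_pi.mp hu i
  have hcoord : ∀ j : Fin 3, ContDiff ℝ 1 (fun y : E3 => y j) :=
    fun j => contDiff_pi.mp contDiff_id j
  have hfc : ContDiff ℝ 1 f := ((hcoord 0).mul (hui 1)).sub ((hcoord 1).mul (hui 0))
  have huisupp : ∀ i : Fin 3, HasCompactSupport (fun y => u y i) :=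
    fun i => hsupp.comp_left (g := fun v : E3 => v i) rfl
  have hw : ∀ i : Fin 3, ContDiff ℝ 1 (fun y => f y * u y i) := fun i => hfc.mul (hui i)
  have hwsupp : ∀ i : Fin 3, HasCompactSupport (fun y => f y * u y i) :=
    fun i => (huisupp i).mul_left
  have key : ∀ x : E3, dot3 (cross3 (sb 2) x) (conv u u x)
      = ∑ i : Fin 3, fderiv ℝ (fun y => f y * u y i) x (sb i) := by
    intro x
    have hD : HasFDerivAt u (fderiv ℝ u x) x := (hu.differentiable one_ne_zero x).hasFDerivAt
    set D := fderiv ℝ u x with hDdef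
    have hP : ∀ j : Fin 3, HasFDerivAt (fun y : E3 => y j)
        (ContinuousLinearMap.proj j : E3 →L[ℝ] ℝ) x :=
      fun j => (ContinuousLinearMap.proj j : E3 →L[ℝ] ℝ).hasFDerivAt
    have hU : ∀ i : Fin 3, HasFDerivAt (fun y => u y i)
        ((ContinuousLinearMap.proj i : E3 →L[ℝ] ℝ).comp D) x :=
      fun i => (ContinuousLinearMap.proj i : E3 →L[ℝ] ℝ).hasFDerivAt.comp x hD
    set L : E3 →L[ℝ] ℝ :=
      x 0 • ((ContinuousLinearMap.proj 1 : E3 →L[ℝ] ℝ).comp D)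
        + u x 1 • (ContinuousLinearMap.proj 0 : E3 →L[ℝ] ℝ)
        - (x 1 • ((ContinuousLinearMap.proj 0 : E3 →L[ℝ] ℝ).comp D)
            + u x 0 • (ContinuousLinearMap.proj 1 : E3 →L[ℝ] ℝ)) with hLdef
    have hF : HasFDerivAt f L x := ((hP 0).mul (hU 1)).sub ((hP 1).mul (hU 0))
    have hW : ∀ i : Fin 3, HasFDerivAt (fun y => f y * u y i)
        (f x • ((ContinuousLinearMap.proj i : E3 →L[ℝ] ℝ).comp D) + u x i • L) x :=
      fun i => hF.mul (hU i)
    have hfd : ∀ i : Fin 3, fderiv ℝ (fun y => f y * u y i) x (sb i)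
        = f x * D (sb i) i + u x i * L (sb i) := by
      intro i
      rw [(hW i).fderiv]
      simp [smul_eq_mul]
    have hux : u x = ∑ i : Fin 3, u x i • sb i := by
      funext j
      simp [sb, Finset.sum_apply, Pi.single_apply]
    have hDux : D (u x) = ∑ i : Fin 3, u x i • D (sb i) := by
      conv_lhs => rw [hux]
      rw [map_sum]
      simp
    have hd := hdiv x
    simp only [div3, jac, Fin.sum_univ_three, ← hDdef, sb] at hd
    simp only [dot3, cross3, conv, ← hDdef, Fin.sum_univ_three, hfd, hDux, hLdef]
    simp only [ContinuousLinearMap.sub_apply, ContinuousLinearMap.add_apply,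
      ContinuousLinearMap.smul_apply, ContinuousLinearMap.comp_apply,
      ContinuousLinearMap.proj_apply, Finset.sum_apply, Pi.smul_apply, Fin.sum_univ_three,
      smul_eq_mul, sb, Pi.single_apply, Matrix.cons_val_zero, Matrix.cons_val_one,
      Matrix.head_cons]
    norm_num [Pi.single_apply, Fin.ext_iff, Matrix.cons_val_two, Matrix.tail_cons]
    linear_combination (x 1 * u x 0 - x 0 * u x 1) * hd
  have hint : ∀ i : Fin 3, Integrable (fun x : E3 => fderiv ℝ (fun y => f y * u y i) x (sb i))
      volume := by
    intro i
    refine Continuous.integrable_of_hasCompactSupport ?_ ?_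
    · exact ((hw i).fderiv_right (m := 0) le_rfl).continuous.clm_apply continuous_const
    · exact ((hwsupp i).fderiv (𝕜 := ℝ)).comp_left (g := fun L : E3 →L[ℝ] ℝ => L (sb i)) rfl
  calc ∫ x : E3, dot3 (cross3 (sb 2) x) (conv u u x)
      = ∫ x : E3, ∑ i : Fin 3, fderiv ℝ (fun y => f y * u y i) x (sb i) := by
        exact integral_congr_ae (Filter.Eventually.of_forall key)
    _ = ∑ i : Fin 3, ∫ x : E3, fderiv ℝ (fun y => f y * u y i) x (sb i) :=
        integral_finset_sum _ (fun i _ => hint i)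
    _ = 0 := by
        refine Finset.sum_eq_zero fun i _ => ?_
        exact aux_integral_fderiv_zero _ (hw i) (hwsupp i) (sb i)
end
end

section
/- Let φ : ℝ³ → ℝ³ be a continuously differentiable, compactly supported vector field with div φ(x) = 0 for every x, and let w(x) := e_z × x. Then ∫_{ℝ³} (Dφ(x)(w(x)))·w(x) dx = 0; that is, the contraction of the tensor w ⊗ w against the Jacobian of φ integrates to zero. -/
open MeasureTheory

noncomputable section

open Filter Topology in
/-- whole-space integral of a directional derivative of a C¹ compactly supported
scalar function vanishes -/
lemma my_integral_fderiv_apply (f : E3 → ℝ) (hf : ContDiff ℝ 1 f)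
    (h'f : HasCompactSupport f) (v : E3) :
    ∫ x : E3, fderiv ℝ f x v = 0 := by
  obtain ⟨C, hC⟩ := ContDiff.lipschitzWith_of_hasCompactSupport h'f hf one_ne_zero
  have A := hC.integral_inv_smul_sub_mul_tendsto_integral_lineDeriv_mul'
      (μ := volume) (g := fun _ : E3 => (1 : ℝ)) h'f continuous_const v
  have hint : Integrable f := hf.continuous.integrable_of_hasCompactSupport h'f
  have B : ∀ t : ℝ, ∫ x : E3, (t⁻¹ • (f (x + t • v) - f x)) * 1 = 0 := by
    intro t
    have h1 : Integrable (fun x : E3 => f (x + t • v)) := by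
      apply Continuous.integrable_of_hasCompactSupport
      · exact hf.continuous.comp (continuous_add_right _)
      · exact h'f.comp_homeomorph (Homeomorph.addRight (t • v))
    simp only [mul_one, smul_eq_mul]
    rw [integral_const_mul, integral_sub h1 hint,
      integral_add_right_eq_self f (t • v)]
    simp
  simp only [B] at A
  have h0 : (∫ x : E3, lineDeriv ℝ f x v * 1) = 0 :=
    tendsto_nhds_unique A tendsto_const_nhds
  rw [← h0]
  congr 1
  ext x
  rw [(hf.differentiable one_ne_zero x).lineDeriv_eq_fderiv, mul_one]

/-- for a C¹ compactly supported divergence-free field φ and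
w(x) = e_z × x, the contraction of w ⊗ w against the Jacobian of φ integrates to zero:
∫ (Dφ(w))·w = 0. -/
theorem stmt_11 (φ : E3 → E3) (hφ : ContDiff ℝ 1 φ) (hsupp : HasCompactSupport φ)
    (hdiv : ∀ x : E3, div3 φ x = 0)
    (w : E3 → E3) (hw : w = fun x => cross3 (sb 2) x) :
    ∫ x : E3, dot3 (fderiv ℝ φ x (w x)) (w x) = 0 := by
  subst hw
  have hφd : Differentiable ℝ φ := hφ.differentiable one_ne_zero
  have hCi : ∀ i : Fin 3, ContDiff ℝ 1 (fun y : E3 => φ y i) :=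
    fun i => (ContinuousLinearMap.proj i : E3 →L[ℝ] ℝ).contDiff.comp hφ
  have hSi : ∀ i : Fin 3, HasCompactSupport (fun y : E3 => φ y i) :=
    fun i => hsupp.comp_left (g := fun v : E3 => v i) rfl
  have hcoord : ∀ j : Fin 3, ContDiff ℝ 1 (fun y : E3 => y j) :=
    fun j => (ContinuousLinearMap.proj j : E3 →L[ℝ] ℝ).contDiff
  have hC0 : ContDiff ℝ 1 (fun y : E3 => y 1 * y 1 * φ y 0 - y 0 * y 1 * φ y 1
      + (1/2) * (y 0 * y 0 + y 1 * y 1) * φ y 0) :=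
    ((((hcoord 1).mul (hcoord 1)).mul (hCi 0)).sub
      (((hcoord 0).mul (hcoord 1)).mul (hCi 1))).add
      ((contDiff_const.mul (((hcoord 0).mul (hcoord 0)).add
        ((hcoord 1).mul (hcoord 1)))).mul (hCi 0))
  have hC1 : ContDiff ℝ 1 (fun y : E3 => y 0 * y 0 * φ y 1 - y 0 * y 1 * φ y 0
      + (1/2) * (y 0 * y 0 + y 1 * y 1) * φ y 1) :=
    ((((hcoord 0).mul (hcoord 0)).mul (hCi 1)).sub
      (((hcoord 0).mul (hcoord 1)).mul (hCi 0))).add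
      ((contDiff_const.mul (((hcoord 0).mul (hcoord 0)).add
        ((hcoord 1).mul (hcoord 1)))).mul (hCi 1))
  have hC2 : ContDiff ℝ 1 (fun y : E3 => (1/2) * (y 0 * y 0 + y 1 * y 1) * φ y 2) :=
    (contDiff_const.mul (((hcoord 0).mul (hcoord 0)).add
      ((hcoord 1).mul (hcoord 1)))).mul (hCi 2)
  have hS0 : HasCompactSupport (fun y : E3 => y 1 * y 1 * φ y 0 - y 0 * y 1 * φ y 1
      + (1/2) * (y 0 * y 0 + y 1 * y 1) * φ y 0) :=
    (((hSi 0).mul_left).comp₂_left ((hSi 1).mul_left) (sub_zero 0)).comp₂_left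
      ((hSi 0).mul_left) (add_zero 0)
  have hS1 : HasCompactSupport (fun y : E3 => y 0 * y 0 * φ y 1 - y 0 * y 1 * φ y 0
      + (1/2) * (y 0 * y 0 + y 1 * y 1) * φ y 1) :=
    (((hSi 1).mul_left).comp₂_left ((hSi 0).mul_left) (sub_zero 0)).comp₂_left
      ((hSi 1).mul_left) (add_zero 0)
  have hS2 : HasCompactSupport (fun y : E3 => (1/2) * (y 0 * y 0 + y 1 * y 1) * φ y 2) :=
    (hSi 2).mul_left
  have hInt : ∀ (F : E3 → ℝ), ContDiff ℝ 1 F → HasCompactSupport F → ∀ v : E3,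
      Integrable (fun x : E3 => fderiv ℝ F x v) := by
    intro F hF h'F v
    apply Continuous.integrable_of_hasCompactSupport
    · exact (hF.continuous_fderiv one_ne_zero).clm_apply continuous_const
    · exact (h'F.fderiv ℝ).comp_left (g := fun L : E3 →L[ℝ] ℝ => L v) rfl
  have key : ∀ x : E3, dot3 (fderiv ℝ φ x (cross3 (sb 2) x)) (cross3 (sb 2) x) =
      fderiv ℝ (fun y : E3 => y 1 * y 1 * φ y 0 - y 0 * y 1 * φ y 1
          + (1/2) * (y 0 * y 0 + y 1 * y 1) * φ y 0) x (sb 0)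
      + fderiv ℝ (fun y : E3 => y 0 * y 0 * φ y 1 - y 0 * y 1 * φ y 0
          + (1/2) * (y 0 * y 0 + y 1 * y 1) * φ y 1) x (sb 1)
      + fderiv ℝ (fun y : E3 => (1/2) * (y 0 * y 0 + y 1 * y 1) * φ y 2) x (sb 2) := by
    intro x
    have hD : ∀ i : Fin 3, HasFDerivAt (fun y => φ y i)
        ((ContinuousLinearMap.proj i : E3 →L[ℝ] ℝ).comp (fderiv ℝ φ x)) x :=
      by
        intro i
        exact ((ContinuousLinearMap.proj i : E3 →L[ℝ] ℝ).hasFDerivAt).comp x (hφd x).hasFDerivAt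
    have hc : ∀ j : Fin 3, HasFDerivAt (fun y : E3 => y j)
        (ContinuousLinearMap.proj j : E3 →L[ℝ] ℝ) x :=
      fun j => by exact (ContinuousLinearMap.proj j : E3 →L[ℝ] ℝ).hasFDerivAt
    have H0 := ((((hc 1).mul (hc 1)).mul (hD 0)).sub (((hc 0).mul (hc 1)).mul (hD 1))).add
        ((((hc 0).mul (hc 0)).add ((hc 1).mul (hc 1))).const_mul (1/2:ℝ) |>.mul (hD 0))
    have H1 := ((((hc 0).mul (hc 0)).mul (hD 1)).sub (((hc 0).mul (hc 1)).mul (hD 0))).add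
        ((((hc 0).mul (hc 0)).add ((hc 1).mul (hc 1))).const_mul (1/2:ℝ) |>.mul (hD 1))
    have H2 := (((hc 0).mul (hc 0)).add ((hc 1).mul (hc 1))).const_mul (1/2:ℝ) |>.mul (hD 2)
    erw [H0.fderiv, H1.fderiv, H2.fderiv]
    have hwx : cross3 (sb 2) x = x 0 • sb 1 - x 1 • sb 0 := by
      funext i; fin_cases i <;> simp [cross3, sb, Pi.single_apply]
    have hdivx := hdiv x
    simp only [div3, jac, Fin.sum_univ_three, sb] at hdivx
    rw [hwx, map_sub, ContinuousLinearMap.map_smul, ContinuousLinearMap.map_smul]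
    simp only [dot3, Fin.sum_univ_three, ContinuousLinearMap.add_apply,
      ContinuousLinearMap.sub_apply, ContinuousLinearMap.smul_apply,
      ContinuousLinearMap.comp_apply, ContinuousLinearMap.proj_apply,
      Pi.sub_apply, Pi.smul_apply, smul_eq_mul, sb, Pi.single_apply]
    norm_num [sb, Pi.single_apply, Fin.ext_iff]
    linear_combination (-(1/2) * (x 0 * x 0 + x 1 * x 1)) * hdivx
  have iA : Integrable (fun x : E3 => fderiv ℝ (fun y : E3 => y 1 * y 1 * φ y 0
      - y 0 * y 1 * φ y 1 + (1/2) * (y 0 * y 0 + y 1 * y 1) * φ y 0) x (sb 0)) :=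
    hInt _ hC0 hS0 (sb 0)
  have iB : Integrable (fun x : E3 => fderiv ℝ (fun y : E3 => y 0 * y 0 * φ y 1
      - y 0 * y 1 * φ y 0 + (1/2) * (y 0 * y 0 + y 1 * y 1) * φ y 1) x (sb 1)) :=
    hInt _ hC1 hS1 (sb 1)
  have iC : Integrable (fun x : E3 => fderiv ℝ (fun y : E3 =>
      (1/2) * (y 0 * y 0 + y 1 * y 1) * φ y 2) x (sb 2)) :=
    hInt _ hC2 hS2 (sb 2)
  have iAB : Integrable (fun x : E3 => fderiv ℝ (fun y : E3 => y 1 * y 1 * φ y 0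
      - y 0 * y 1 * φ y 1 + (1/2) * (y 0 * y 0 + y 1 * y 1) * φ y 0) x (sb 0)
      + fderiv ℝ (fun y : E3 => y 0 * y 0 * φ y 1
      - y 0 * y 1 * φ y 0 + (1/2) * (y 0 * y 0 + y 1 * y 1) * φ y 1) x (sb 1)) := iA.add iB
  simp only [key]
  rw [integral_add iAB iC, integral_add iA iB,
    my_integral_fderiv_apply _ hC0 hS0 (sb 0),
    my_integral_fderiv_apply _ hC1 hS1 (sb 1),
    my_integral_fderiv_apply _ hC2 hS2 (sb 2)]
  norm_num
end
end
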